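/- Let M be the Gram matrix of vectors b_1,...,b_n in a real inner product space, and suppose P^T M P = R^T R where P is a permutation matrix corresponding to a permutation p, and R = (R_11 R_12) is upper triangular with R_11 an r×r upper triangular matrix with strictly positive diagonal entries (a rank-revealing Cholesky decomposition). Then {b_{p(1)}, ..., b_{p(r)}} is a basis for the span of {b_1, ..., b_n}. -/

import Mathlib

open Matrix
open scoped RealInnerProductSpace

private lemma sum_extend_aux {W : Type*} [AddCommMonoid W] [Module ℝ W]
    {n r : ℕ} (hr : r ≤ n) (a : Fin r → ℝ) (f : Fin n → W) :
    ∑ k : Fin n, (if h : (k : ℕ) < r then a ⟨k, h⟩ else 0) • f k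
      = ∑ i : Fin r, a i • f (Fin.castLE hr i) := by
  classical
  rw [← Finset.sum_filter_of_ne (p := fun k : Fin n => (k : ℕ) < r)
      (fun x _ hx => by by_contra h; simp [h] at hx)]
  rw [show (Finset.univ.filter fun k : Fin n => (k : ℕ) < r)
      = Finset.univ.image (Fin.castLE hr) by
    ext k
    simp only [Finset.mem_image, Finset.mem_filter, Finset.mem_univ, true_and]
    constructor
    · intro hk; exact ⟨⟨k, hk⟩, rfl⟩
    · rintro ⟨i, rfl⟩; exact i.isLt]
  rw [Finset.sum_image (fun x _ y _ h => Fin.castLE_injective hr h)]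
  refine Finset.sum_congr rfl fun i _ => ?_
  rw [dif_pos (by simp)]
  exact congrArg (fun x => a x • f (Fin.castLE hr i)) (Fin.ext rfl)

private lemma inner_self_sum_aux {V : Type*} [NormedAddCommGroup V]
    [InnerProductSpace ℝ V] {n : ℕ} (a : Fin n → ℝ) (c : Fin n → V) :
    ⟪∑ i, a i • c i, ∑ i, a i • c i⟫ = ∑ i, ∑ j, (a i * a j) * ⟪c i, c j⟫ := by
  rw [sum_inner]
  refine Finset.sum_congr rfl fun i _ => ?_
  rw [inner_sum]
  refine Finset.sum_congr rfl fun j _ => ?_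
  rw [real_inner_smul_left, real_inner_smul_right]
  ring

theorem stmt4 {V : Type*} [NormedAddCommGroup V] [InnerProductSpace ℝ V]
    (n r : ℕ) (hr : r ≤ n) (b : Fin n → V)
    (M : Matrix (Fin n) (Fin n) ℝ) (hM : ∀ i j, M i j = ⟪b j, b i⟫)
    (p : Equiv.Perm (Fin n))
    (P : Matrix (Fin n) (Fin n) ℝ) (hP : ∀ i j, P i j = if i = p j then 1 else 0)
    (R : Matrix (Fin r) (Fin n) ℝ)
    (hdecomp : Pᵀ * M * P = Rᵀ * R)
    (hupper : ∀ (i : Fin r) (j : Fin n), (j : ℕ) < (i : ℕ) → R i j = 0)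
    (hdiag : ∀ i : Fin r, 0 < R i (Fin.castLE hr i)) :
    LinearIndependent ℝ (fun i : Fin r => b (p (Fin.castLE hr i))) ∧
      Submodule.span ℝ (Set.range fun i : Fin r => b (p (Fin.castLE hr i))) =
        Submodule.span ℝ (Set.range b) := by
  classical
  set c : Fin n → V := fun j => b (p j) with hc
  -- Gram identity
  have hgram : ∀ i j : Fin n, ⟪c i, c j⟫ = ∑ k : Fin r, R k i * R k j := by
    intro i j
    have h1 : (Pᵀ * M * P) j i = M (p j) (p i) := by
      simp [Matrix.mul_apply, hP, Finset.sum_ite_eq, Finset.sum_ite_eq',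
        mul_ite, ite_mul, Matrix.transpose_apply]
    have h2 : (Rᵀ * R) j i = ∑ k : Fin r, R k i * R k j := by
      simp [Matrix.mul_apply, Matrix.transpose_apply, mul_comm]
    have := congrFun (congrFun hdecomp j) i
    rw [h1, h2] at this
    rw [← this, hM]
  -- key equivalence
  have key : ∀ a : Fin n → ℝ, (∑ i, a i • c i = 0 ↔ R *ᵥ a = 0) := by
    intro a
    have hinner : ⟪∑ i, a i • c i, ∑ i, a i • c i⟫
        = ∑ k : Fin r, (R *ᵥ a) k * (R *ᵥ a) k := by
      rw [inner_self_sum_aux]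
      have e0 : ∀ (i j : Fin n), (a i * a j) * ⟪c i, c j⟫
          = ∑ k : Fin r, (a i * R k i) * (a j * R k j) := by
        intro i j
        rw [hgram, Finset.mul_sum]
        exact Finset.sum_congr rfl fun k _ => by ring
      calc ∑ i, ∑ j, (a i * a j) * ⟪c i, c j⟫
          = ∑ i : Fin n, ∑ j : Fin n, ∑ k : Fin r, (a i * R k i) * (a j * R k j) :=
            Finset.sum_congr rfl fun i _ => Finset.sum_congr rfl fun j _ => e0 i j
        _ = ∑ i : Fin n, ∑ k : Fin r, ∑ j : Fin n, (a i * R k i) * (a j * R k j) :=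
            Finset.sum_congr rfl fun i _ => Finset.sum_comm ..
        _ = ∑ k : Fin r, ∑ i : Fin n, ∑ j : Fin n, (a i * R k i) * (a j * R k j) :=
            Finset.sum_comm ..
        _ = ∑ k : Fin r, (∑ i : Fin n, a i * R k i) * (∑ j : Fin n, a j * R k j) :=
            Finset.sum_congr rfl fun k _ => (Finset.sum_mul_sum _ _ _ _).symm
        _ = ∑ k : Fin r, (R *ᵥ a) k * (R *ᵥ a) k := by
            simp [Matrix.mulVec, dotProduct, mul_comm]
    constructor
    · intro h
      have h0 : ∑ k : Fin r, (R *ᵥ a) k * (R *ᵥ a) k = 0 := by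
        rw [← hinner, h, inner_zero_left]
      funext k
      have := (Finset.sum_eq_zero_iff_of_nonneg
        (fun k _ => mul_self_nonneg ((R *ᵥ a) k))).1 h0 k (Finset.mem_univ k)
      exact mul_self_eq_zero.mp this
    · intro h
      have h0 : ⟪∑ i, a i • c i, ∑ i, a i • c i⟫ = 0 := by
        rw [hinner, h]; simp
      exact inner_self_eq_zero.mp h0
  -- the r×r block
  set R11 : Matrix (Fin r) (Fin r) ℝ := R.submatrix id (Fin.castLE hr) with hR11
  have hdet : R11.det ≠ 0 := by
    have htri : R11.BlockTriangular id := by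
      intro i j hij
      exact hupper i (Fin.castLE hr j) (by simpa using hij)
    rw [Matrix.det_of_upperTriangular htri]
    exact ne_of_gt (Finset.prod_pos fun i _ => hdiag i)
  -- extension of coefficients
  have hmv : ∀ a : Fin r → ℝ,
      R *ᵥ (fun k : Fin n => if h : (k : ℕ) < r then a ⟨k, h⟩ else 0)
        = R11 *ᵥ a := by
    intro a
    funext k
    have := sum_extend_aux (W := ℝ) hr a (fun j => R k j)
    simpa [Matrix.mulVec, dotProduct, smul_eq_mul, mul_comm, hR11] using this
  -- linear independence
  have hli : LinearIndependent ℝ (fun i : Fin r => c (Fin.castLE hr i)) := by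
    rw [Fintype.linearIndependent_iff]
    intro g hg
    set g' : Fin n → ℝ := fun k => if h : (k : ℕ) < r then g ⟨k, h⟩ else 0 with hg'
    have hsum : ∑ k, g' k • c k = 0 := by
      rw [hg', sum_extend_aux hr g c]; exact hg
    have : R11 *ᵥ g = 0 := by rw [← hmv g]; exact (key g').1 hsum
    have hg0 : g = 0 := Matrix.eq_zero_of_mulVec_eq_zero hdet this
    intro i; rw [hg0]; rfl
  -- membership in span
  have hmem : ∀ j : Fin n,
      c j ∈ Submodule.span ℝ (Set.range fun i : Fin r => c (Fin.castLE hr i)) := by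
    intro j
    set a : Fin r → ℝ := R11⁻¹ *ᵥ (fun k => R k j) with ha
    have hRa : R11 *ᵥ a = fun k => R k j := by
      rw [ha, Matrix.mulVec_mulVec, Matrix.mul_nonsing_inv _ (isUnit_iff_ne_zero.mpr hdet),
        Matrix.one_mulVec]
    set a' : Fin n → ℝ :=
      fun k => (if h : (k : ℕ) < r then a ⟨k, h⟩ else 0) - (Pi.single j 1 : Fin n → ℝ) k with ha'
    have hmv' : R *ᵥ a' = 0 := by
      have h1 : R *ᵥ a' = R11 *ᵥ a - R *ᵥ (Pi.single j 1 : Fin n → ℝ) := by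
        rw [← hmv a]
        rw [show a' = (fun k : Fin n => if h : (k : ℕ) < r then a ⟨k, h⟩ else 0)
            - (Pi.single j 1 : Fin n → ℝ) from rfl]
        exact Matrix.mulVec_sub R _ _
      have h2 : R *ᵥ (Pi.single j 1 : Fin n → ℝ) = fun k => R k j := by
        funext k
        simp [Matrix.mulVec, dotProduct, Pi.single_apply]
      rw [h1, h2, hRa, sub_self]
    have hsum : ∑ k, a' k • c k = 0 := (key a').2 hmv'
    have hsplit : ∑ k, a' k • c k
        = (∑ i : Fin r, a i • c (Fin.castLE hr i)) - c j := by
      rw [show (fun k => a' k • c k)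
          = fun k : Fin n => (if h : (k : ℕ) < r then a ⟨k, h⟩ else 0) • c k
            - (Pi.single j 1 : Fin n → ℝ) k • c k by funext k; rw [ha', sub_smul]]
      rw [Finset.sum_sub_distrib, sum_extend_aux hr a c]
      congr 1
      simp [Pi.single_apply, ite_smul]
    have : c j = ∑ i : Fin r, a i • c (Fin.castLE hr i) := by
      rw [hsplit] at hsum
      exact (sub_eq_zero.mp hsum).symm
    rw [this]
    exact Submodule.sum_mem _ fun i _ =>
      Submodule.smul_mem _ _ (Submodule.subset_span ⟨i, rfl⟩)
  refine ⟨hli, ?_⟩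
  apply le_antisymm
  · refine Submodule.span_mono ?_
    rintro x ⟨i, rfl⟩
    exact ⟨p (Fin.castLE hr i), rfl⟩
  · rw [show Set.range b = Set.range c from
      (Function.Surjective.range_comp p.surjective b).symm]
    rw [Submodule.span_le]
    rintro x ⟨j, rfl⟩
    exact hmem j
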